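/- Fix positive integers n, m, k with m ≥ 2. There exists a real number L(n,m,k), depending only on n, m, and k, with the following property: for any Deligne-bounded cusp sequences a_1, …, a_m : ℕ → ℂ of even weights ℓ_1, …, ℓ_m (each ℓ_i ≥ 12), if ℓ = ℓ_1 + ⋯ + ℓ_m > L(n,m,k), then |(a_1 ∗ a_2 ∗ ⋯ ∗ a_m)(n)| ≤ n^{ℓ/2 − k}. -/

import Mathlib

/-- `a : ℕ → ℂ` is a Deligne-bounded cusp sequence of weight `ℓ` if `ℓ` is an even
integer `≥ 12`, `a 0 = 0`, and `|a n| ≤ 2 n^(ℓ/2)` for all `n ≥ 1`. -/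
def IsDeligneCusp (a : ℕ → ℂ) (ℓ : ℕ) : Prop :=
  Even ℓ ∧ 12 ≤ ℓ ∧ a 0 = 0 ∧
    ∀ n : ℕ, 1 ≤ n → ‖a n‖ ≤ 2 * (n : ℝ) ^ ((ℓ : ℝ) / 2)

/-- For fixed positive integers `n, m, k` with `m ≥ 2` there is a bound `L(n,m,k)` such
that for any `m` Deligne-bounded cusp sequences of total weight `ℓ > L(n,m,k)`, the
`n`-th coefficient of their product (Cauchy convolution) is at most `n^(ℓ/2 - k)`. -/
theorem cusp_product_coeff_small (n m k : ℕ) (hn : 0 < n) (hm : 2 ≤ m) (hk : 0 < k) :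
    ∃ L : ℝ, ∀ (a : Fin m → ℕ → ℂ) (ℓ : Fin m → ℕ),
      (∀ i, IsDeligneCusp (a i) (ℓ i)) → L < ((∑ i, ℓ i : ℕ) : ℝ) →
      ‖PowerSeries.coeff n (∏ i, PowerSeries.mk (a i))‖ ≤
        (n : ℝ) ^ (((∑ i, ℓ i : ℕ) : ℝ) / 2 - k) := by
  classical
  by_cases hnm : n < m
  · -- coefficient is zero
    refine ⟨0, fun a ℓ ha _ => ?_⟩
    have h0 : PowerSeries.coeff n (∏ i, PowerSeries.mk (a i)) = 0 := by
      rw [PowerSeries.coeff_prod]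
      apply Finset.sum_eq_zero
      intro l hl
      rw [Finset.mem_finsuppAntidiag] at hl
      have hex : ∃ i, l i = 0 := by
        by_contra h
        push_neg at h
        have : (m : ℕ) ≤ n := by
          calc m = ∑ _i : Fin m, 1 := by simp
          _ ≤ ∑ i, l i := Finset.sum_le_sum fun i _ => Nat.one_le_iff_ne_zero.2 (h i)
          _ = n := hl.1
        omega
      obtain ⟨i, hi⟩ := hex
      apply Finset.prod_eq_zero (Finset.mem_univ i)
      rw [hi]
      simpa using (ha i).2.2.1
    rw [h0, norm_zero]
    exact Real.rpow_nonneg (by positivity) _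
  · push_neg at hnm
    have hn2 : 2 ≤ n := le_trans hm hnm
    have hn2' : (2 : ℝ) ≤ (n : ℝ) := by exact_mod_cast hn2
    set S := Finset.finsuppAntidiag (Finset.univ : Finset (Fin m)) n with hSdef
    set C : ℝ := (S.card + 1) * 2 ^ m * (n : ℝ) ^ k with hCdef
    have hCpos : 0 < C := by positivity
    set r : ℝ := ((n : ℝ) - 1) / n with hrdef
    have hr0 : 0 ≤ r := by
      apply div_nonneg <;> linarith
    have hr1 : r < 1 := by
      rw [div_lt_one (by linarith)]; linarith
    have htend : Filter.Tendsto (fun x : ℝ => r ^ x) Filter.atTop (nhds 0) :=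
      tendsto_rpow_atTop_of_base_lt_one r (by linarith) hr1
    have hev : ∀ᶠ x : ℝ in Filter.atTop, r ^ x < 1 / C :=
      htend.eventually (gt_mem_nhds (by positivity))
    obtain ⟨L₀, hL₀⟩ := Filter.eventually_atTop.1 hev
    refine ⟨2 * L₀, fun a ℓ ha hW => ?_⟩
    set W : ℕ := ∑ i, ℓ i with hWdef
    have hWhalf : L₀ ≤ (W : ℝ) / 2 := by linarith
    have hrW : r ^ ((W : ℝ) / 2) < 1 / C := hL₀ _ hWhalf
    have hb0 : (0 : ℝ) ≤ (n : ℝ) - 1 := by linarith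
    -- per-term bound
    have key : ∀ l ∈ S, ‖∏ i, (PowerSeries.coeff (l i)) (PowerSeries.mk (a i))‖
        ≤ 2 ^ m * ((n : ℝ) - 1) ^ ((W : ℝ) / 2) := by
      intro l hl
      rw [Finset.mem_finsuppAntidiag] at hl
      simp only [PowerSeries.coeff_mk]
      by_cases hex : ∃ i, l i = 0
      · obtain ⟨i, hi⟩ := hex
        have : ∏ i, a i (l i) = 0 := by
          apply Finset.prod_eq_zero (Finset.mem_univ i)
          rw [hi]; exact (ha i).2.2.1
        rw [this, norm_zero]
        positivity
      · push_neg at hex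
        have hle : ∀ i, (l i : ℝ) ≤ (n : ℝ) - 1 := by
          intro i
          have : Nontrivial (Fin m) := Fin.nontrivial_iff_two_le.2 hm
          obtain ⟨j, hj⟩ := exists_ne i
          have h1 : l i + l j ≤ n := by
            have : l i + l j = ∑ t ∈ {i, j}, l t := by
              rw [Finset.sum_pair (Ne.symm hj)]
            rw [← hl.1, this]
            exact Finset.sum_le_sum_of_subset (Finset.subset_univ _)
          have : l i + 1 ≤ n := le_trans (by
            have := Nat.one_le_iff_ne_zero.2 (hex j); omega) h1
          have : (l i : ℝ) + 1 ≤ (n : ℝ) := by exact_mod_cast this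
          linarith
        rw [norm_prod]
        calc ∏ i, ‖a i (l i)‖
            ≤ ∏ i, (2 * ((n : ℝ) - 1) ^ ((ℓ i : ℝ) / 2)) := by
              apply Finset.prod_le_prod
              · intro i _; exact norm_nonneg _
              · intro i _
                refine le_trans ((ha i).2.2.2 (l i) (Nat.one_le_iff_ne_zero.2 (hex i))) ?_
                have := Real.rpow_le_rpow (by positivity : (0:ℝ) ≤ (l i : ℝ)) (hle i)
                  (by positivity : (0:ℝ) ≤ (ℓ i : ℝ) / 2)
                linarith
          _ = 2 ^ m * ((n : ℝ) - 1) ^ ((W : ℝ) / 2) := by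
              rw [Finset.prod_mul_distrib, Finset.prod_const, Finset.card_univ, Fintype.card_fin]
              congr 1
              rw [← Real.rpow_sum_of_nonneg hb0 (fun i _ => by positivity)]
              congr 1
              rw [hWdef]
              push_cast
              rw [Finset.sum_div]
    -- total bound
    have hsum : ‖PowerSeries.coeff n (∏ i, PowerSeries.mk (a i))‖
        ≤ S.card * (2 ^ m * ((n : ℝ) - 1) ^ ((W : ℝ) / 2)) := by
      rw [PowerSeries.coeff_prod]
      refine le_trans (norm_sum_le _ _) ?_
      refine le_trans (Finset.sum_le_sum key) ?_
      rw [Finset.sum_const, nsmul_eq_mul]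
    refine le_trans hsum ?_
    -- now the arithmetic
    have hnpos : (0 : ℝ) < (n : ℝ) := by linarith
    have hmulr : ((n : ℝ) - 1) = (n : ℝ) * r := by
      rw [hrdef]; field_simp
    have hsplit : ((n : ℝ) - 1) ^ ((W : ℝ) / 2)
        = (n : ℝ) ^ ((W : ℝ) / 2) * r ^ ((W : ℝ) / 2) := by
      rw [hmulr, Real.mul_rpow (le_of_lt hnpos) hr0]
    have hrhs : (n : ℝ) ^ (((W : ℕ) : ℝ) / 2 - k)
        = (n : ℝ) ^ ((W : ℝ) / 2) / (n : ℝ) ^ k := by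
      rw [Real.rpow_sub hnpos, Real.rpow_natCast]
    rw [hrhs, hsplit]
    have hnk : (0 : ℝ) < (n : ℝ) ^ k := by positivity
    have hnW : (0 : ℝ) < (n : ℝ) ^ ((W : ℝ) / 2) := Real.rpow_pos_of_pos hnpos _
    have hnk : (0 : ℝ) < (n : ℝ) ^ k := by positivity
    have hnW : (0 : ℝ) < (n : ℝ) ^ ((W : ℝ) / 2) := Real.rpow_pos_of_pos hnpos _
    have h1 : (S.card : ℝ) * 2 ^ m * (n : ℝ) ^ k * r ^ ((W : ℝ) / 2) ≤ 1 := by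
      have hle : (S.card : ℝ) * 2 ^ m * (n : ℝ) ^ k ≤ C := by
        rw [hCdef]
        have : (S.card : ℝ) ≤ (S.card : ℝ) + 1 := by linarith
        nlinarith [pow_pos (by norm_num : (0:ℝ) < 2) m]
      have h2 : C * r ^ ((W : ℝ) / 2) ≤ 1 := by
        rw [mul_comm, ← le_div_iff₀ hCpos]
        exact le_of_lt hrW
      calc (S.card : ℝ) * 2 ^ m * (n : ℝ) ^ k * r ^ ((W : ℝ) / 2)
          ≤ C * r ^ ((W : ℝ) / 2) :=
            mul_le_mul_of_nonneg_right hle (Real.rpow_nonneg hr0 _)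
        _ ≤ 1 := h2
    have h2 := mul_le_mul_of_nonneg_right h1 (le_of_lt hnW)
    rw [le_div_iff₀ hnk]
    nlinarith [h2]
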